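/- Let F_n(q) = ∑_{σ∈S_n(321,231)} q^{crs(σ)} be the crossing-number distribution over permutations of [n] avoiding both 321 and 231. Then for all n ≥ 2, F_n(q) = (1+q)·F_{n−1}(q) + (1−q)·F_{n−2}(q), with F_0(q)=F_1(q)=1. -/

import Mathlib

set_option maxRecDepth 4000


open Finset Polynomial Equiv

attribute [local instance] Classical.propDecidable

def isCrossing {n : ℕ} (σ : Equiv.Perm (Fin n)) (i j : Fin n) : Prop :=
  (i < j ∧ j < σ i ∧ σ i < σ j) ∨ (σ i < σ j ∧ σ j ≤ i ∧ i < j)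

noncomputable def crs {n : ℕ} (σ : Equiv.Perm (Fin n)) : ℕ :=
  (Finset.univ.filter (fun p : Fin n × Fin n => isCrossing σ p.1 p.2)).card

def avoids123 {n : ℕ} (σ : Equiv.Perm (Fin n)) : Prop :=
  ¬ ∃ i j k : Fin n, i < j ∧ j < k ∧ σ i < σ j ∧ σ j < σ k

def avoids132 {n : ℕ} (σ : Equiv.Perm (Fin n)) : Prop :=
  ¬ ∃ i j k : Fin n, i < j ∧ j < k ∧ σ i < σ k ∧ σ k < σ j

def avoids213 {n : ℕ} (σ : Equiv.Perm (Fin n)) : Prop :=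
  ¬ ∃ i j k : Fin n, i < j ∧ j < k ∧ σ j < σ i ∧ σ i < σ k

def avoids231 {n : ℕ} (σ : Equiv.Perm (Fin n)) : Prop :=
  ¬ ∃ i j k : Fin n, i < j ∧ j < k ∧ σ k < σ i ∧ σ i < σ j

def avoids312 {n : ℕ} (σ : Equiv.Perm (Fin n)) : Prop :=
  ¬ ∃ i j k : Fin n, i < j ∧ j < k ∧ σ j < σ k ∧ σ k < σ i

def avoids321 {n : ℕ} (σ : Equiv.Perm (Fin n)) : Prop :=
  ¬ ∃ i j k : Fin n, i < j ∧ j < k ∧ σ k < σ j ∧ σ j < σ i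

noncomputable def ut {n : ℕ} (σ : Equiv.Perm (Fin n)) : ℕ :=
  (Finset.univ.filter (fun i : Fin n => σ⁻¹ i < i ∧ i < σ i)).card

noncomputable def lt' {n : ℕ} (σ : Equiv.Perm (Fin n)) : ℕ :=
  (Finset.univ.filter (fun i : Fin n => σ i < i ∧ i < σ⁻¹ i)).card

noncomputable def F321231 (n : ℕ) : Polynomial ℤ :=
  ∑ σ ∈ Finset.univ.filter (fun σ : Equiv.Perm (Fin n) => avoids321 σ ∧ avoids231 σ),
    (Polynomial.X : Polynomial ℤ) ^ crs σ

def Pp {n : ℕ} (σ : Equiv.Perm (Fin n)) : Prop := ∀ i : Fin n, (i:ℕ) ≤ (σ i : ℕ) + 1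

lemma card_filter_apply_lt {n : ℕ} (σ : Equiv.Perm (Fin n)) (c : Fin n) :
    (Finset.univ.filter fun p : Fin n => (σ p : ℕ) < (c:ℕ)).card = (c:ℕ) := by
  have hb : (Finset.univ.filter fun p : Fin n => (σ p : ℕ) < (c:ℕ)).card
      = (Finset.Iio c).card := by
    apply Finset.card_bij (fun p _ => σ p)
    · intro a ha; simp only [mem_filter, mem_univ, true_and] at ha
      exact Finset.mem_Iio.mpr (Fin.lt_def.mpr ha)
    · intro a _ b _ h; exact σ.injective h
    · intro b hb
      refine ⟨σ⁻¹ b, ?_, by simp⟩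
      simp only [mem_filter, mem_univ, true_and, Equiv.Perm.inv_def, Equiv.apply_symm_apply]
      exact Fin.lt_def.mp (Finset.mem_Iio.mp hb)
  rw [hb, Fin.card_Iio]

lemma key {n : ℕ} {σ : Equiv.Perm (Fin n)} (h : Pp σ) {i j : Fin n} (hij : i < j)
    (h1 : (j:ℕ) < σ i) (h2 : (j:ℕ) < σ j) : False := by
  have hsub : (Finset.univ.filter fun p : Fin n => (σ p : ℕ) < (j:ℕ)) ⊆
      ((Finset.Iic j).erase i).erase j := by
    intro p hp
    simp only [mem_filter, mem_univ, true_and] at hp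
    have hple := h p
    simp only [Finset.mem_erase, Finset.mem_Iic]
    refine ⟨?_, ?_, ?_⟩
    · rintro rfl; omega
    · rintro rfl; omega
    · rw [Fin.le_def]; omega
  have hcard := Finset.card_le_card hsub
  rw [card_filter_apply_lt] at hcard
  have h1' : ((Finset.Iic j).erase i).card = (j:ℕ) := by
    rw [Finset.card_erase_of_mem (by simp [Finset.mem_Iic, le_of_lt hij]), Fin.card_Iic]
    omega
  have h2' : (((Finset.Iic j).erase i).erase j).card = (j:ℕ) - 1 := by
    rw [Finset.card_erase_of_mem, h1']
    simp [Finset.mem_erase, Finset.mem_Iic, ne_of_gt hij]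
  have : 1 ≤ (j:ℕ) := by have := Fin.lt_def.mp hij; omega
  omega

lemma char {n : ℕ} (σ : Equiv.Perm (Fin n)) :
    (avoids321 σ ∧ avoids231 σ) ↔ Pp σ := by
  constructor
  · rintro ⟨h321, h231⟩ i
    by_contra hc
    push_neg at hc
    set A := (Finset.Iio i).filter (fun k : Fin n => σ i < σ k) with hA
    have hsplit := Finset.card_filter_add_card_filter_not
      (s := Finset.Iio i) (p := fun k : Fin n => σ i < σ k)
    have hsub : (Finset.Iio i).filter (fun k : Fin n => ¬ σ i < σ k) ⊆
        Finset.univ.filter fun p : Fin n => (σ p : ℕ) < ((σ i : Fin n) : ℕ) := by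
      intro k hk
      simp only [Finset.mem_filter, Finset.mem_Iio, Finset.mem_univ, true_and] at hk ⊢
      obtain ⟨hk1, hk2⟩ := hk
      have hne : σ k ≠ σ i := fun h => (ne_of_lt hk1) (σ.injective h)
      have := lt_of_le_of_ne (not_lt.mp hk2) hne
      exact Fin.lt_def.mp this
    have hble := Finset.card_le_card hsub
    rw [card_filter_apply_lt] at hble
    rw [← hA] at hsplit
    rw [Fin.card_Iio] at hsplit
    have h2card : 2 ≤ A.card := by omega
    obtain ⟨a, ha, b, hb, hab⟩ := Finset.one_lt_card.mp (by omega : 1 < A.card)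
    simp only [hA, Finset.mem_filter, Finset.mem_Iio] at ha hb
    rcases hab.lt_or_gt with h | h
    · rcases (show σ a ≠ σ b from fun hh => hab (σ.injective hh)).lt_or_gt with h' | h'
      · exact h231 ⟨a, b, i, h, hb.1, ha.2, h'⟩
      · exact h321 ⟨a, b, i, h, hb.1, hb.2, h'⟩
    · rcases (show σ a ≠ σ b from fun hh => hab (σ.injective hh)).lt_or_gt with h' | h'
      · exact h321 ⟨b, a, i, h, ha.1, ha.2, h'⟩
      · exact h231 ⟨b, a, i, h, ha.1, hb.2, h'⟩
  · intro hP
    constructor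
    · rintro ⟨i, j, k, hij, hjk, h1, h2⟩
      have hk := hP k
      have hjk' := Fin.lt_def.mp hjk
      have h1' := Fin.lt_def.mp h1
      have h2' := Fin.lt_def.mp h2
      exact key hP hij (by omega) (by omega)
    · rintro ⟨i, j, k, hij, hjk, h1, h2⟩
      have hk := hP k
      have hjk' := Fin.lt_def.mp hjk
      have h1' := Fin.lt_def.mp h1
      have h2' := Fin.lt_def.mp h2
      exact key hP hij (by omega) (by omega)

noncomputable def Astat {n : ℕ} (σ : Equiv.Perm (Fin n)) : ℕ :=
  (Finset.univ.filter fun j : Fin n =>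
    ((σ (σ j)):ℕ) + 1 = ((σ j):ℕ) ∧ ((σ j):ℕ) + 1 = (j:ℕ)).card

lemma crossChar {n : ℕ} {σ : Equiv.Perm (Fin n)} (hP : Pp σ) (i j : Fin n) :
    isCrossing σ i j ↔
      ((σ j:ℕ) = (i:ℕ) ∧ ((σ i:ℕ) + 1 = (i:ℕ)) ∧ (j:ℕ) = (i:ℕ) + 1) := by
  constructor
  · rintro (⟨h1, h2, h3⟩ | ⟨h1, h2, h3⟩)
    · exact absurd (key hP h1 (Fin.lt_def.mp h2)
        (Fin.lt_def.mp (lt_trans h2 h3))) (fun h => h)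
    · have hi := hP i
      have hj := hP j
      have h1' := Fin.lt_def.mp h1
      have h2' := Fin.le_def.mp h2
      have h3' := Fin.lt_def.mp h3
      omega
  · rintro ⟨h1, h2, h3⟩
    right
    exact ⟨Fin.lt_def.mpr (by omega), Fin.le_def.mpr (by omega), Fin.lt_def.mpr (by omega)⟩

lemma crs_eq_Astat {n : ℕ} {σ : Equiv.Perm (Fin n)} (hP : Pp σ) : crs σ = Astat σ := by
  apply Finset.card_bij (fun p _ => p.2)
  · intro p hp
    simp only [Finset.mem_filter, Finset.mem_univ, true_and] at hp ⊢
    rw [crossChar hP] at hp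
    obtain ⟨h1, h2, h3⟩ := hp
    have hfix : σ p.2 = p.1 := Fin.ext h1
    rw [hfix]
    omega
  · intro p hp q hq h
    simp only [Finset.mem_filter, Finset.mem_univ, true_and, crossChar hP] at hp hq
    have : p.1 = q.1 := by
      apply Fin.ext; rw [← hp.1, ← hq.1, h]
    exact Prod.ext this h
  · intro j hj
    simp only [Finset.mem_filter, Finset.mem_univ, true_and] at hj
    refine ⟨(σ j, j), ?_, rfl⟩
    simp only [Finset.mem_filter, Finset.mem_univ, true_and, crossChar hP]
    exact ⟨hj.1, hj.2.symm⟩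

lemma swap_eval {m : ℕ} (p x : Fin (m+1)) (hx : x ≠ 0) :
    Equiv.swap 0 p x = if x = p then 0 else x := by
  rcases eq_or_ne x p with rfl | h
  · simp [Equiv.swap_apply_right]
  · rw [if_neg h, Equiv.swap_apply_of_ne_of_ne hx h]

lemma Pp_zero_iff {n : ℕ} (e : Equiv.Perm (Fin n)) :
    Pp (Equiv.Perm.decomposeFin.symm (0, e)) ↔ Pp e := by
  have happ : ∀ i : Fin n, Equiv.Perm.decomposeFin.symm (0, e) i.succ = (e i).succ := by
    intro i
    rw [Equiv.Perm.decomposeFin_symm_apply_succ, Equiv.swap_self]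
    rfl
  constructor
  · intro h i
    have := h i.succ
    rw [happ] at this
    simpa [Fin.val_succ] using this
  · intro h j
    induction j using Fin.cases with
    | zero => simp
    | succ i =>
      rw [happ]
      have := h i
      simp [Fin.val_succ]
      omega

lemma Astat_zero {n : ℕ} (e : Equiv.Perm (Fin n)) :
    Astat (Equiv.Perm.decomposeFin.symm (0, e)) = Astat e := by
  set σ := Equiv.Perm.decomposeFin.symm (0, e) with hσ
  have happ : ∀ i : Fin n, σ i.succ = (e i).succ := by
    intro i
    rw [hσ, Equiv.Perm.decomposeFin_symm_apply_succ, Equiv.swap_self]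
    rfl
  symm
  apply Finset.card_bij (fun i _ => i.succ)
  · intro i hi
    simp only [Finset.mem_filter, Finset.mem_univ, true_and] at hi ⊢
    rw [happ, happ, Fin.val_succ, Fin.val_succ, Fin.val_succ]
    omega
  · intro a _ b _ h
    exact Fin.succ_injective _ h
  · intro j hj
    simp only [Finset.mem_filter, Finset.mem_univ, true_and] at hj
    have hj0 : j ≠ 0 := by
      rintro rfl
      have h0 : σ 0 = 0 := Equiv.Perm.decomposeFin_symm_apply_zero 0 e
      rw [h0] at hj
      simp at hj
    obtain ⟨i, rfl⟩ := Fin.exists_succ_eq.mpr hj0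
    refine ⟨i, ?_, rfl⟩
    simp only [Finset.mem_filter, Finset.mem_univ, true_and]
    rw [happ, happ] at hj
    simp only [Fin.val_succ] at hj
    omega

lemma happ_eval {n : ℕ} (e : Equiv.Perm (Fin (n+1))) (p : Fin (n+2)) (i : Fin (n+1)) :
    Equiv.Perm.decomposeFin.symm (p, e) i.succ
      = if (e i).succ = p then 0 else (e i).succ := by
  rw [Equiv.Perm.decomposeFin_symm_apply_succ, swap_eval _ _ (Fin.succ_ne_zero _)]

lemma Pp_ne_zero_iff {n : ℕ} (e : Equiv.Perm (Fin (n+1))) (p : Fin (n+2)) (hp : p ≠ 0) :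
    Pp (Equiv.Perm.decomposeFin.symm (p, e)) ↔ Pp e ∧ (p:ℕ) = (e 0:ℕ) + 1 := by
  set σ := Equiv.Perm.decomposeFin.symm (p, e) with hσ
  have hp1 : 1 ≤ (p:ℕ) := by
    rcases Nat.eq_zero_or_pos (p:ℕ) with h | h
    · exact absurd (Fin.ext h) hp
    · exact h
  have hplt : (p:ℕ) < n + 2 := p.isLt
  constructor
  · intro h
    set q : Fin (n+1) := ⟨(p:ℕ)-1, by omega⟩ with hq
    have he : (e (e.symm q)).succ = p := by
      apply Fin.ext
      rw [Fin.val_succ, Equiv.apply_symm_apply]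
      simp [hq]
      omega
    have h1 := h (e.symm q).succ
    rw [hσ] at h1
    rw [happ_eval, if_pos he] at h1
    simp only [Fin.val_succ, Fin.val_zero] at h1
    have hi0 : e.symm q = 0 := Fin.ext (by simp only [Fin.val_zero]; omega)
    have he0 : e 0 = q := by rw [← hi0, Equiv.apply_symm_apply]
    refine ⟨?_, by rw [he0]; simp [hq]; omega⟩
    intro i
    by_cases hc : (e i).succ = p
    · have : e i = e (e.symm q) := Fin.succ_injective _ (hc.trans he.symm)
      have : i = e.symm q := e.injective this
      rw [this, hi0]
      simp
    · have h2 := h i.succ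
      rw [hσ, happ_eval, if_neg hc] at h2
      simp only [Fin.val_succ] at h2
      omega
  · rintro ⟨hPe, hpe⟩ j
    induction j using Fin.cases with
    | zero => simp
    | succ i =>
      by_cases hc : (e i).succ = p
      · have hei : e i = e 0 := by
          apply Fin.ext
          have := congrArg Fin.val hc
          rw [Fin.val_succ] at this
          omega
        have : i = 0 := e.injective hei
        subst this
        rw [hσ, happ_eval, if_pos hc]
        simp
      · rw [hσ, happ_eval, if_neg hc]
        have := hPe i
        simp only [Fin.val_succ]
        omega

lemma Astat_ne_zero {n : ℕ} (e : Equiv.Perm (Fin (n+1))) (p : Fin (n+2))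
    (hPe : Pp e) (hpe : (p:ℕ) = (e 0:ℕ) + 1) :
    Astat (Equiv.Perm.decomposeFin.symm (p, e))
      = Astat e + (if (e 0:ℕ) = 0 then 0 else 1) := by
  set σ := Equiv.Perm.decomposeFin.symm (p, e) with hσdef
  have hps : (e 0).succ = p := Fin.ext (by rw [Fin.val_succ]; omega)
  have hσ0 : σ 0 = p := Equiv.Perm.decomposeFin_symm_apply_zero p e
  have hσ1 : σ (Fin.succ 0) = 0 := by rw [hσdef, happ_eval, if_pos hps]
  have hAs : ∀ (m : ℕ) (τ : Equiv.Perm (Fin m)), Astat τ = ∑ j : Fin m,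
      if ((τ (τ j)):ℕ) + 1 = ((τ j):ℕ) ∧ ((τ j):ℕ) + 1 = (j:ℕ) then 1 else 0 := by
    intro m τ; exact Finset.card_filter _ _
  rw [hAs, hAs, Fin.sum_univ_succ]
  have h00 : (if ((σ (σ 0)):ℕ) + 1 = ((σ 0):ℕ) ∧ ((σ 0):ℕ) + 1 = ((0:Fin (n+2)):ℕ)
      then 1 else 0) = 0 := by
    rw [if_neg]; rintro ⟨-, h2⟩; simp only [Fin.val_zero] at h2; omega
  rw [h00, zero_add]
  by_cases h0 : (e 0 : ℕ) = 0
  · rw [if_pos h0, add_zero]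
    apply Finset.sum_congr rfl
    intro i _
    by_cases hi0 : i = 0
    · subst hi0
      rw [hσ1, hσ0]
      simp only [Fin.val_succ, Fin.val_zero]
      split_ifs <;> first | omega | (simp_all; try omega)
    · have hne : (e i).succ ≠ p := fun hcc =>
        hi0 (e.injective (Fin.succ_injective _ (hcc.trans hps.symm)))
      have hs : σ i.succ = (e i).succ := by rw [hσdef, happ_eval, if_neg hne]
      have he00 : e 0 = 0 := Fin.ext (by simpa using h0)
      have hei0 : e i ≠ 0 := by
        intro hz
        exact hi0 (e.injective (hz.trans he00.symm))
      have hne2 : (e (e i)).succ ≠ p := fun hcc =>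
        hei0 (e.injective (Fin.succ_injective _ (hcc.trans hps.symm)))
      have hss : σ ((e i).succ) = (e (e i)).succ := by
        rw [hσdef, happ_eval, if_neg hne2]
      rw [hs, hss]
      simp only [Fin.val_succ]
      split_ifs <;> first | omega | (simp_all; try omega)
  · rw [if_neg h0]
    have hone : (e.symm 0 : ℕ) = 1 := by
      have h1 := hPe (e.symm 0)
      rw [Equiv.apply_symm_apply] at h1
      have hne : (e.symm 0 : ℕ) ≠ 0 := by
        intro hh
        apply h0
        have hz : e.symm 0 = 0 := Fin.ext (by simpa using hh)
        have h2 := e.apply_symm_apply 0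
        rw [hz] at h2
        rw [h2]
        simp
      simp only [Fin.val_zero] at h1
      omega
    have heone : e (e.symm 0) = 0 := e.apply_symm_apply 0
    have hstep : ∀ i : Fin (n+1),
        (if ((σ (σ i.succ)):ℕ) + 1 = ((σ i.succ):ℕ) ∧ ((σ i.succ):ℕ) + 1 = (i.succ:ℕ)
          then 1 else 0)
        = (if ((e (e i)):ℕ) + 1 = ((e i):ℕ) ∧ ((e i):ℕ) + 1 = (i:ℕ) then 1 else 0)
          + (if i = e.symm 0 then 1 else 0) := by
      intro i
      by_cases hi0 : i = 0
      · subst hi0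
        rw [hσ1, hσ0]
        have hind : (0 : Fin (n+1)) ≠ e.symm 0 := by
          intro hh
          rw [← hh] at hone
          simp at hone
        rw [if_neg hind]
        simp only [Fin.val_succ, Fin.val_zero]
        split_ifs <;> first | omega | (simp_all; try omega)
      · by_cases hi1 : i = e.symm 0
        · subst hi1
          have hnep : (e (e.symm 0)).succ ≠ p := by
            rw [heone]
            intro hcc
            have h2 : (0 : Fin (n+1)) = e 0 := Fin.succ_injective _ (hcc.trans hps.symm)
            exact h0 (by rw [← h2]; simp)
          have hs : σ (e.symm 0).succ = (0 : Fin (n+1)).succ := by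
            rw [hσdef, happ_eval, if_neg hnep, heone]
          rw [hs, hσ1, heone, if_pos rfl]
          simp only [Fin.val_succ, Fin.val_zero, hone]
          split_ifs <;> first | omega | (simp_all; try omega)
        · have hne : (e i).succ ≠ p := fun hcc =>
            hi0 (e.injective (Fin.succ_injective _ (hcc.trans hps.symm)))
          have hs : σ i.succ = (e i).succ := by rw [hσdef, happ_eval, if_neg hne]
          have hei0 : e i ≠ 0 := by
            intro hz
            exact hi1 (e.injective (by rw [hz, heone]))
          have hne2 : (e (e i)).succ ≠ p := fun hcc =>
            hei0 (e.injective (Fin.succ_injective _ (hcc.trans hps.symm)))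
          have hss : σ ((e i).succ) = (e (e i)).succ := by
            rw [hσdef, happ_eval, if_neg hne2]
          rw [hs, hss, if_neg hi1]
          simp only [Fin.val_succ]
          split_ifs <;> first | omega | (simp_all; try omega)
    rw [Finset.sum_congr rfl (fun i _ => hstep i), Finset.sum_add_distrib,
      Finset.sum_ite_eq' Finset.univ (e.symm 0) (fun _ => 1)]
    simp

lemma F321231_eq (n : ℕ) : F321231 n = ∑ σ : Equiv.Perm (Fin n),
    if Pp σ then (Polynomial.X : Polynomial ℤ) ^ Astat σ else 0 := by
  rw [F321231, Finset.sum_filter]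
  apply Finset.sum_congr rfl
  intro σ _
  by_cases h : Pp σ
  · rw [if_pos h, if_pos ((char σ).mpr h), crs_eq_Astat h]
  · rw [if_neg h, if_neg (fun hh => h ((char σ).mp hh))]

lemma B_eq (n : ℕ) :
    (∑ e : Equiv.Perm (Fin (n+1)), if Pp e ∧ (e 0:ℕ) = 0
      then (Polynomial.X : Polynomial ℤ) ^ Astat e else 0) = F321231 n := by
  rw [F321231_eq]
  rw [← Equiv.sum_comp (Equiv.Perm.decomposeFin.symm)
    (fun e : Equiv.Perm (Fin (n+1)) => if Pp e ∧ (e 0:ℕ) = 0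
      then (Polynomial.X : Polynomial ℤ) ^ Astat e else 0)]
  rw [Fintype.sum_prod_type]
  rw [Finset.sum_eq_single (0 : Fin (n+1))]
  · apply Finset.sum_congr rfl
    intro e _
    have h0 : Equiv.Perm.decomposeFin.symm ((0 : Fin (n+1)), e) 0 = 0 :=
      Equiv.Perm.decomposeFin_symm_apply_zero 0 e
    by_cases h : Pp e
    · rw [if_pos ⟨(Pp_zero_iff e).mpr h, by rw [h0]; rfl⟩, if_pos h, Astat_zero]
    · rw [if_neg (fun hh => h ((Pp_zero_iff e).mp hh.1)), if_neg h]
  · intro p _ hp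
    apply Finset.sum_eq_zero
    intro e _
    rw [if_neg]
    rintro ⟨-, h2⟩
    rw [Equiv.Perm.decomposeFin_symm_apply_zero] at h2
    exact hp (Fin.ext h2)
  · intro h
    exact absurd (Finset.mem_univ _) h

lemma F321231_rec (n : ℕ) : F321231 (n+2) = (1 + Polynomial.X) * F321231 (n+1) + (1 - Polynomial.X) * F321231 n := by
  classical
  set B : Polynomial ℤ := ∑ e : Equiv.Perm (Fin (n+1)), if Pp e ∧ (e 0:ℕ) = 0
      then (Polynomial.X : Polynomial ℤ) ^ Astat e else 0 with hBdef
  set C : Polynomial ℤ := ∑ e : Equiv.Perm (Fin (n+1)), if Pp e ∧ ¬ ((e 0:ℕ) = 0)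
      then (Polynomial.X : Polynomial ℤ) ^ Astat e else 0 with hCdef
  have hBC : F321231 (n+1) = B + C := by
    rw [F321231_eq, hBdef, hCdef, ← Finset.sum_add_distrib]
    apply Finset.sum_congr rfl
    intro e _
    by_cases h1 : Pp e <;> by_cases h2 : (e 0:ℕ) = 0 <;> simp [h1, h2]
  have hinner : ∀ e : Equiv.Perm (Fin (n+1)),
      (∑ p : Fin (n+2), if Pp (Equiv.Perm.decomposeFin.symm (p, e))
          then (Polynomial.X : Polynomial ℤ) ^ Astat (Equiv.Perm.decomposeFin.symm (p, e)) else 0)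
        = (if Pp e then (Polynomial.X : Polynomial ℤ) ^ Astat e else 0)
          + (if Pp e then (Polynomial.X : Polynomial ℤ) ^
              (Astat e + (if (e 0:ℕ) = 0 then 0 else 1)) else 0) := by
    intro e
    have hab : (0 : Fin (n+2)) ≠ (e 0).succ := (Fin.succ_ne_zero _).symm
    have hsupp : ∀ p ∈ (Finset.univ : Finset (Fin (n+2))),
        p ∉ ({0, (e 0).succ} : Finset (Fin (n+2))) →
        (if Pp (Equiv.Perm.decomposeFin.symm (p, e))
          then (Polynomial.X : Polynomial ℤ) ^ Astat (Equiv.Perm.decomposeFin.symm (p, e))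
          else 0) = 0 := by
      intro p _ hp
      simp only [Finset.mem_insert, Finset.mem_singleton, not_or] at hp
      rw [if_neg]
      intro hPσ
      rw [Pp_ne_zero_iff e p hp.1] at hPσ
      exact hp.2 (Fin.ext (by rw [Fin.val_succ]; exact hPσ.2))
    rw [← Finset.sum_subset (Finset.subset_univ ({0, (e 0).succ} : Finset (Fin (n+2)))) hsupp]
    rw [Finset.sum_pair hab]
    congr 1
    · by_cases h : Pp e
      · rw [if_pos ((Pp_zero_iff e).mpr h), if_pos h, Astat_zero]
      · rw [if_neg (fun hh => h ((Pp_zero_iff e).mp hh)), if_neg h]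
    · have hbne : (e 0).succ ≠ (0 : Fin (n+2)) := Fin.succ_ne_zero _
      have hbval : (((e 0).succ : Fin (n+2)) : ℕ) = (e 0:ℕ) + 1 := Fin.val_succ _
      by_cases h : Pp e
      · rw [if_pos ((Pp_ne_zero_iff e _ hbne).mpr ⟨h, hbval⟩), if_pos h,
          Astat_ne_zero e _ h hbval]
      · rw [if_neg (fun hh => h ((Pp_ne_zero_iff e _ hbne).mp hh).1), if_neg h]
  have hmain : F321231 (n+2) = F321231 (n+1) + (B + C * Polynomial.X) := by
    rw [F321231_eq (n+2)]
    rw [← Equiv.sum_comp (Equiv.Perm.decomposeFin.symm)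
      (fun σ : Equiv.Perm (Fin (n+2)) => if Pp σ
        then (Polynomial.X : Polynomial ℤ) ^ Astat σ else 0)]
    rw [Fintype.sum_prod_type, Finset.sum_comm]
    have : ∀ e : Equiv.Perm (Fin (n+1)),
        (∑ p : Fin (n+2), if Pp (Equiv.Perm.decomposeFin.symm (p, e))
          then (Polynomial.X : Polynomial ℤ) ^ Astat (Equiv.Perm.decomposeFin.symm (p, e)) else 0)
        = (if Pp e then (Polynomial.X : Polynomial ℤ) ^ Astat e else 0)
          + ((if Pp e ∧ (e 0:ℕ) = 0 then (Polynomial.X : Polynomial ℤ) ^ Astat e else 0)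
            + (if Pp e ∧ ¬ ((e 0:ℕ) = 0)
                then (Polynomial.X : Polynomial ℤ) ^ Astat e else 0) * Polynomial.X) := by
      intro e
      rw [hinner e]
      congr 1
      by_cases h1 : Pp e <;> by_cases h2 : (e 0:ℕ) = 0 <;>
        simp [h1, h2, pow_succ]
    rw [Finset.sum_congr rfl (fun e _ => this e), Finset.sum_add_distrib,
      Finset.sum_add_distrib, ← Finset.sum_mul, ← F321231_eq, ← hBdef, ← hCdef]
  have hB : B = F321231 n := B_eq n
  rw [hmain, hBC, hB] at *
  rw [hmain] at *
  ring

lemma F321231_zero : F321231 0 = 1 := by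
  rw [F321231_eq]
  have hP : ∀ σ : Equiv.Perm (Fin 0), Pp σ := fun σ i => i.elim0
  have hA : ∀ σ : Equiv.Perm (Fin 0), Astat σ = 0 := by
    intro σ
    simp [Astat]
  simp [hP, hA, Finset.card_univ]

lemma F321231_one : F321231 1 = 1 := by
  rw [F321231_eq]
  have hP : ∀ σ : Equiv.Perm (Fin 1), Pp σ := by
    intro σ i
    have := i.isLt
    omega
  have hA : ∀ σ : Equiv.Perm (Fin 1), Astat σ = 0 := by
    intro σ
    rw [Astat, Finset.card_eq_zero, Finset.filter_eq_empty_iff]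
    intro j _
    rintro ⟨c1, c2⟩
    have := (σ (σ j)).isLt
    have := (σ j).isLt
    omega
  simp [hP, hA, Finset.card_univ]

theorem recurrence_321_231 :
    (∀ n : ℕ, 2 ≤ n →
        F321231 n = (1 + Polynomial.X) * F321231 (n - 1) +
          (1 - Polynomial.X) * F321231 (n - 2)) ∧
      F321231 0 = 1 ∧ F321231 1 = 1 := by
  refine ⟨?_, F321231_zero, F321231_one⟩
  intro n hn
  obtain ⟨m, rfl⟩ : ∃ m, n = m + 2 := ⟨n - 2, by omega⟩
  exact F321231_rec m
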